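/- Let N ≥ 1, let X and Ω be nonempty sets, let u, v : X → ℝᴺ, a, b : X → ℝ, z, z̃ : Ω → ℝ, and λ, λ̃ : Ω → ℝᴺ. Suppose that for all x ∈ X and all w ∈ Ω, a(x) + ⟨u(x), λ(w)⟩ − z(w) = b(x) + ⟨v(x), λ̃(w)⟩ − z̃(w). Suppose moreover there exist N + 1 points w₀, w₁, …, w_N ∈ Ω such that the N × N matrix L whose l-th column is λ(w_l) − λ(w₀) is invertible. Then there exist an N × N real matrix M and a vector q ∈ ℝᴺ such that u(x) = M · v(x) + q for all x ∈ X. -/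
import Mathlib


/-- **Step II (linear-algebraic core).** If
`a(x) + ⟨u(x), λ(w)⟩ − z(w) = b(x) + ⟨v(x), λ̃(w)⟩ − z̃(w)` for all `x ∈ X`, `w ∈ Ω`,
and there are `N + 1` pivot points `w₀, …, w_N` such that the matrix `L` with `l`-th
column `λ(w_l) − λ(w₀)` is invertible, then `u(x) = M · v(x) + q` for some fixed
matrix `M` and vector `q`. -/
theorem affine_relation_from_pivots
    (N : ℕ) (hN : 1 ≤ N) (X Ω : Type*) [Nonempty X] [Nonempty Ω]
    (u v : X → Fin N → ℝ) (a b : X → ℝ) (z z' : Ω → ℝ)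
    (lam lam' : Ω → Fin N → ℝ)
    (heq : ∀ (x : X) (w : Ω),
      a x + (∑ i, u x i * lam w i) - z w
        = b x + (∑ i, v x i * lam' w i) - z' w)
    (hpivots : ∃ w : Fin (N + 1) → Ω,
      IsUnit (Matrix.of (fun i l : Fin N => lam (w l.succ) i - lam (w 0) i)).det) :
    ∃ (M : Matrix (Fin N) (Fin N) ℝ) (q : Fin N → ℝ),
      ∀ x : X, u x = M.mulVec (v x) + q := by
  obtain ⟨w, hL⟩ := hpivots
  set L : Matrix (Fin N) (Fin N) ℝ :=
    Matrix.of (fun i l : Fin N => lam (w l.succ) i - lam (w 0) i) with hLdef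
  set L' : Matrix (Fin N) (Fin N) ℝ :=
    Matrix.of (fun i l : Fin N => lam' (w l.succ) i - lam' (w 0) i) with hL'def
  set c : Fin N → ℝ :=
    fun l => (z (w l.succ) - z (w 0)) - (z' (w l.succ) - z' (w 0)) with hcdef
  have key : ∀ x : X, L.transpose.mulVec (u x) = L'.transpose.mulVec (v x) + c := by
    intro x
    funext l
    have h1 := heq x (w l.succ)
    have h0 := heq x (w 0)
    simp only [Matrix.mulVec, Matrix.transpose_apply, dotProduct, Pi.add_apply,
      hLdef, hL'def, Matrix.of_apply, hcdef]
    have e1 : ∑ i, (lam (w l.succ) i - lam (w 0) i) * u x i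
        = (∑ i, u x i * lam (w l.succ) i) - ∑ i, u x i * lam (w 0) i := by
      rw [← Finset.sum_sub_distrib]; congr 1; funext i; ring
    have e2 : ∑ i, (lam' (w l.succ) i - lam' (w 0) i) * v x i
        = (∑ i, v x i * lam' (w l.succ) i) - ∑ i, v x i * lam' (w 0) i := by
      rw [← Finset.sum_sub_distrib]; congr 1; funext i; ring
    rw [e1, e2]
    linarith
  have hLT : IsUnit L.transpose.det := by simpa [Matrix.det_transpose] using hL
  have hinv : L.transpose⁻¹ * L.transpose = 1 := Matrix.nonsing_inv_mul _ hLT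
  refine ⟨L.transpose⁻¹ * L'.transpose, L.transpose⁻¹.mulVec c, fun x => ?_⟩
  have : L.transpose⁻¹.mulVec (L.transpose.mulVec (u x))
      = L.transpose⁻¹.mulVec (L'.transpose.mulVec (v x) + c) := by rw [key x]
  rw [Matrix.mulVec_mulVec, hinv, Matrix.one_mulVec, Matrix.mulVec_add,
    Matrix.mulVec_mulVec] at this
  exact this
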